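/- Let s, t ∈ ℝ, y* ∈ ℝⁿ, and let the lsc function f : ℝⁿ → ℝ ∪ {∞} be variationally s-convex at x̄ ∈ dom f for x̄* ∈ ∂f(x̄). Then the function ψ := f + ⟨y*, · − x̄⟩ + (t/2)‖· − x̄‖² is variationally (s+t)-convex at x̄ for x̄* + y*. -/

import Mathlib

open scoped RealInnerProductSpace
open Filter Topology Metric Matrix

noncomputable section

abbrev En (n : ℕ) := EuclideanSpace ℝ (Fin n)

variable {n : ℕ}

/-- The regular (Fréchet) subdifferential of an extended-real-valued function. -/
def FSubdiff (f : En n → EReal) (x : En n) : Set (En n) :=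
  {v | ∀ c : ℝ, 0 < c → ∃ δ > (0:ℝ), ∀ y ∈ ball x δ,
    f x + ((⟪v, y - x⟫ - c * ‖y - x‖ : ℝ) : EReal) ≤ f y}

/-- The limiting (Mordukhovich) subdifferential, via f-attentive convergence. -/
def LSubdiff (f : En n → EReal) (x : En n) : Set (En n) :=
  {v | ∃ xs vs : ℕ → En n, (∀ k, vs k ∈ FSubdiff f (xs k)) ∧
    Tendsto xs atTop (𝓝 x) ∧ Tendsto (fun k => f (xs k)) atTop (𝓝 (f x)) ∧
    Tendsto vs atTop (𝓝 v)}

/-- The graph of the f-attentive ε-localization of the subdifferential around (x̄, x̄*). -/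
def GphT (f : En n → EReal) (xb xbs : En n) (ε : ℝ) : Set (En n × En n) :=
  {p | p.2 ∈ LSubdiff f p.1 ∧ f p.1 < f xb + (ε : EReal) ∧
       p.1 ∈ ball xb ε ∧ p.2 ∈ ball xbs ε}

/-- Prox-regularity of f at x̄ for x̄* with parameters r ≥ 0 and ε > 0. -/
def ProxReg (f : En n → EReal) (xb xbs : En n) (r ε : ℝ) : Prop :=
  (∃ a : ℝ, f xb = (a : EReal)) ∧ xbs ∈ LSubdiff f xb ∧ 0 ≤ r ∧ 0 < ε ∧
  ∀ x' ∈ ball xb ε, ∀ p ∈ GphT f xb xbs ε,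
    f p.1 + ((⟪p.2, x' - p.1⟫ - r / 2 * ‖x' - p.1‖ ^ 2 : ℝ) : EReal) ≤ f x'

/-- Variational s-convexity of f at x̄ for x̄*. -/
def VarConv (f : En n → EReal) (s : ℝ) (xb xbs : En n) : Prop :=
  (∃ a : ℝ, f xb = (a : EReal)) ∧ xbs ∈ LSubdiff f xb ∧
  ∃ (U V : Set (En n)) (fh : En n → EReal) (ρ : ℝ),
    IsOpen U ∧ Convex ℝ U ∧ xb ∈ U ∧ IsOpen V ∧ Convex ℝ V ∧ xbs ∈ V ∧
    LowerSemicontinuous fh ∧ f xb < (ρ : EReal) ∧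
    -- fh - (s/2)‖·‖² is convex on U
    (∀ x ∈ U, ∀ y ∈ U, ∀ a b : ℝ, 0 ≤ a → 0 ≤ b → a + b = 1 →
      fh (a • x + b • y) +
        ((s / 2 * (a * ‖x‖ ^ 2 + b * ‖y‖ ^ 2 - ‖a • x + b • y‖ ^ 2) : ℝ) : EReal)
        ≤ (a : EReal) * fh x + (b : EReal) * fh y) ∧
    (∀ x ∈ U, fh x ≤ f x) ∧
    ({p : En n × En n | p.2 ∈ LSubdiff f p.1 ∧ f p.1 < (ρ : EReal)} ∩ U ×ˢ V
      = {p : En n × En n | p.2 ∈ LSubdiff fh p.1} ∩ U ×ˢ V) ∧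
    (∀ p ∈ {p : En n × En n | p.2 ∈ LSubdiff f p.1 ∧ f p.1 < (ρ : EReal)} ∩ U ×ˢ V,
      f p.1 = fh p.1)


section Helpers
variable {n : ℕ}

lemma er_add_add (u : EReal) (r q : ℝ) : u + r + q = u + ((r+q :ℝ):EReal) := by
  induction u using EReal.rec
  · simp [EReal.bot_add]
  · rw [← EReal.coe_add, ← EReal.coe_add, ← EReal.coe_add, add_assoc]
  · simp [EReal.top_add_coe]

lemma er_add_cancel (u : EReal) (r : ℝ) : u + r + ((-r : ℝ):EReal) = u := by
  rw [er_add_add]; simp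

lemma er_add_le_add (u v : EReal) (r q : ℝ) (h : u + r ≤ v) (hrq : q ≤ r) : u + q ≤ v := by
  refine le_trans ?_ h
  exact add_le_add le_rfl (EReal.coe_le_coe_iff.mpr hrq)

lemma er_le_coe_sub (u : EReal) (r q : ℝ) (h : u + r ≤ (q : EReal)) : u ≤ ((q - r : ℝ) : EReal) := by
  induction u using EReal.rec
  · exact bot_le
  · rw [← EReal.coe_add] at h
    exact_mod_cast by linarith [EReal.coe_le_coe_iff.mp h]
  · simp [EReal.top_add_coe] at h

lemma er_lt_coe_sub (u : EReal) (r q : ℝ) (h : u + r < (q : EReal)) : u < ((q - r : ℝ) : EReal) := by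
  induction u using EReal.rec
  · exact bot_lt_iff_ne_bot.mpr (EReal.coe_ne_bot _)
  · rw [← EReal.coe_add] at h
    exact_mod_cast by linarith [EReal.coe_lt_coe_iff.mp h]
  · simp [EReal.top_add_coe] at h

lemma er_add_eq_bot (u : EReal) (r : ℝ) (h : u + r = ⊥) : u = ⊥ := by
  rcases EReal.add_eq_bot_iff.mp h with h | h
  · exact h
  · simp at h

lemma er_mul_add_coe (a : ℝ) (ha : 0 ≤ a) (u : EReal) (r : ℝ) :
    (a : EReal) * (u + r) = (a : EReal) * u + ((a * r : ℝ) : EReal) := by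
  rcases eq_or_lt_of_le ha with h | h
  · subst h; simp [EReal.zero_mul]
  · induction u using EReal.rec
    · rw [EReal.bot_add, EReal.coe_mul_bot_of_pos h, EReal.bot_add]
    · rw [← EReal.coe_add, ← EReal.coe_mul, ← EReal.coe_mul, ← EReal.coe_add]; ring_nf
    · rw [EReal.top_add_coe, EReal.coe_mul_top_of_pos h, EReal.top_add_coe]

def gfun (w : En n) (t : ℝ) (x0 : En n) (x : En n) : ℝ :=
  ⟪w, x - x0⟫ + t / 2 * ‖x - x0‖ ^ 2

def Gmap (w : En n) (t : ℝ) (x0 z : En n) : En n := w + t • (z - x0)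

lemma gfun_expand (w : En n) (t : ℝ) (x0 z y : En n) :
    gfun w t x0 y = gfun w t x0 z + ⟪Gmap w t x0 z, y - z⟫ + t / 2 * ‖y - z‖ ^ 2 := by
  simp only [gfun, Gmap]
  have h1 : y - x0 = (y - z) + (z - x0) := by abel
  rw [h1, norm_add_sq_real, inner_add_right, inner_add_left, real_inner_smul_left]
  rw [real_inner_comm (y - z) (z - x0)]
  ring

lemma gfun_neg (w : En n) (t : ℝ) (x0 x : En n) : gfun (-w) (-t) x0 x = - gfun w t x0 x := by
  simp [gfun, inner_neg_left]; ring

lemma Gmap_neg (w : En n) (t : ℝ) (x0 z : En n) : Gmap (-w) (-t) x0 z = - Gmap w t x0 z := by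
  simp [Gmap, neg_smul]; abel

lemma quad_id (x y : En n) (a b : ℝ) (hab : a + b = 1) :
    a * ‖x‖ ^ 2 + b * ‖y‖ ^ 2 - ‖a • x + b • y‖ ^ 2 = a * b * ‖x - y‖ ^ 2 := by
  have hb : b = 1 - a := by linarith
  subst hb
  simp only [← real_inner_self_eq_norm_sq, inner_add_left, inner_add_right, inner_sub_left,
    inner_sub_right, real_inner_smul_left, real_inner_smul_right]
  rw [real_inner_comm y x]
  ring

lemma gfun_convex (w : En n) (t : ℝ) (x0 x y : En n) (a b : ℝ) (hab : a + b = 1) :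
    a * gfun w t x0 x + b * gfun w t x0 y
      = gfun w t x0 (a • x + b • y) + t / 2 * (a * ‖x‖ ^ 2 + b * ‖y‖ ^ 2 - ‖a • x + b • y‖ ^ 2) := by
  simp only [gfun]
  have hb : b = 1 - a := by linarith
  subst hb
  simp only [← real_inner_self_eq_norm_sq, inner_add_left, inner_add_right, inner_sub_left,
    inner_sub_right, real_inner_smul_left, real_inner_smul_right]
  rw [real_inner_comm y x, real_inner_comm x0 x, real_inner_comm x0 y]
  ring

lemma gfun_cont (w : En n) (t : ℝ) (x0 : En n) : Continuous (gfun w t x0) := by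
  unfold gfun
  exact (Continuous.inner continuous_const (continuous_id.sub continuous_const)).add
    (continuous_const.mul (((continuous_id.sub continuous_const).norm.pow 2)))

lemma fsub_shift (h : En n → EReal) (w : En n) (t : ℝ) (x0 z v : En n)
    (hv : v ∈ FSubdiff h z) :
    v + Gmap w t x0 z ∈ FSubdiff (fun x => h x + ((gfun w t x0 x : ℝ) : EReal)) z := by
  intro c hc
  obtain ⟨δ₁, hδ₁, H⟩ := hv (c/2) (by positivity)
  refine ⟨min δ₁ (c/(|t|+1)), lt_min hδ₁ (by positivity), ?_⟩
  intro y hy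
  have hy1 : y ∈ ball z δ₁ := ball_subset_ball (min_le_left _ _) hy
  have h1 := H y hy1
  have hd : ‖y - z‖ < c/(|t|+1) := by
    have := mem_ball_iff_norm.mp hy
    exact lt_of_lt_of_le this (min_le_right _ _)
  have hd0 : (0:ℝ) ≤ ‖y - z‖ := norm_nonneg _
  -- real inequality
  have hreal : gfun w t x0 z + (⟪v + Gmap w t x0 z, y - z⟫ - c * ‖y - z‖)
      ≤ (⟪v, y - z⟫ - c/2 * ‖y - z‖) + gfun w t x0 y := by
    rw [gfun_expand w t x0 z y, inner_add_left]
    have ht : |t| * ‖y - z‖ ≤ c := by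
      have h2 : ‖y - z‖ * (|t| + 1) < c := (lt_div_iff₀ (by positivity)).mp hd
      nlinarith [hd0]
    nlinarith [neg_abs_le t, sq_nonneg (‖y - z‖), mul_le_mul_of_nonneg_right ht hd0,
      abs_nonneg t]
  calc h z + ((gfun w t x0 z : ℝ) : EReal) + ((⟪v + Gmap w t x0 z, y - z⟫ - c * ‖y - z‖ : ℝ) : EReal)
      = h z + ((gfun w t x0 z + (⟪v + Gmap w t x0 z, y - z⟫ - c * ‖y - z‖) : ℝ) : EReal) :=
        er_add_add _ _ _
    _ ≤ h z + (((⟪v, y - z⟫ - c/2 * ‖y - z‖) + gfun w t x0 y : ℝ) : EReal) :=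
        add_le_add le_rfl (EReal.coe_le_coe_iff.mpr hreal)
    _ = h z + ((⟪v, y - z⟫ - c/2 * ‖y - z‖ : ℝ) : EReal) + ((gfun w t x0 y : ℝ) : EReal) :=
        (er_add_add _ _ _).symm
    _ ≤ h y + ((gfun w t x0 y : ℝ) : EReal) := add_le_add h1 le_rfl

lemma fsub_shift_iff (h : En n → EReal) (w : En n) (t : ℝ) (x0 z v : En n) :
    v ∈ FSubdiff h z ↔
      v + Gmap w t x0 z ∈ FSubdiff (fun x => h x + ((gfun w t x0 x : ℝ) : EReal)) z := by
  constructor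
  · exact fsub_shift h w t x0 z v
  · intro hv
    have h2 := fsub_shift (fun x => h x + ((gfun w t x0 x : ℝ) : EReal)) (-w) (-t) x0 z _ hv
    have hfe : (fun x => (h x + ((gfun w t x0 x : ℝ) : EReal)) + ((gfun (-w) (-t) x0 x : ℝ) : EReal)) = h := by
      funext x
      rw [gfun_neg]
      exact er_add_cancel _ _
    rw [hfe] at h2
    have hvv : v + Gmap w t x0 z + Gmap (-w) (-t) x0 z = v := by
      rw [Gmap_neg]; abel
    rwa [hvv] at h2

lemma tendsto_ereal_add_coe {α : Type*} {l : Filter α} (u : α → EReal) (r : α → ℝ) (L : EReal) (R : ℝ)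
    (hu : Tendsto u l (𝓝 L)) (hr : Tendsto r l (𝓝 R)) :
    Tendsto (fun k => u k + ((r k : ℝ) : EReal)) l (𝓝 (L + (R : EReal))) := by
  have hpair : Tendsto (fun k => (u k, ((r k : ℝ) : EReal))) l (𝓝 (L, ((R : ℝ) : EReal))) :=
    hu.prodMk_nhds (EReal.tendsto_coe.mpr hr)
  exact (EReal.continuousAt_add (Or.inr (EReal.coe_ne_bot R))
    (Or.inr (EReal.coe_ne_top R))).tendsto.comp hpair

lemma lsub_shift (h : En n → EReal) (w : En n) (t : ℝ) (x0 z v : En n)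
    (hv : v ∈ LSubdiff h z) :
    v + Gmap w t x0 z ∈ LSubdiff (fun x => h x + ((gfun w t x0 x : ℝ) : EReal)) z := by
  obtain ⟨xs, vs, hF, hx, hfx, hvs⟩ := hv
  refine ⟨xs, fun k => vs k + Gmap w t x0 (xs k), fun k => fsub_shift h w t x0 _ _ (hF k), hx, ?_, ?_⟩
  · exact tendsto_ereal_add_coe _ _ _ _ hfx (((gfun_cont w t x0).tendsto z).comp hx)
  · have hG : Tendsto (fun k => Gmap w t x0 (xs k)) atTop (𝓝 (Gmap w t x0 z)) := by
      have : Continuous (Gmap w t x0) := by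
        unfold Gmap
        fun_prop
      exact (this.tendsto z).comp hx
    exact hvs.add hG

lemma lsub_shift_iff (h : En n → EReal) (w : En n) (t : ℝ) (x0 z v : En n) :
    v ∈ LSubdiff h z ↔
      v + Gmap w t x0 z ∈ LSubdiff (fun x => h x + ((gfun w t x0 x : ℝ) : EReal)) z := by
  constructor
  · exact lsub_shift h w t x0 z v
  · intro hv
    have h2 := lsub_shift (fun x => h x + ((gfun w t x0 x : ℝ) : EReal)) (-w) (-t) x0 z _ hv
    have hfe : (fun x => (h x + ((gfun w t x0 x : ℝ) : EReal)) + ((gfun (-w) (-t) x0 x : ℝ) : EReal)) = h := by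
      funext x
      rw [gfun_neg]
      exact er_add_cancel _ _
    rw [hfe] at h2
    have hvv : v + Gmap w t x0 z + Gmap (-w) (-t) x0 z = v := by
      rw [Gmap_neg]; abel
    rwa [hvv] at h2

lemma lsc_add_gfun (fh : En n → EReal) (hfh : LowerSemicontinuous fh) (w : En n) (t : ℝ) (x0 : En n) :
    LowerSemicontinuous (fun x => fh x + ((gfun w t x0 x : ℝ) : EReal)) := by
  refine hfh.add' (Continuous.lowerSemicontinuous ?_) ?_
  · exact continuous_coe_real_ereal.comp (gfun_cont w t x0)
  · intro x
    exact EReal.continuousAt_add (Or.inr (EReal.coe_ne_bot _)) (Or.inr (EReal.coe_ne_top _))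

lemma fre_subgrad_of_conv (fh : En n → EReal) (s : ℝ) (U : Set (En n)) (hUc : Convex ℝ U)
    (hconv : ∀ x ∈ U, ∀ y ∈ U, ∀ a b : ℝ, 0 ≤ a → 0 ≤ b → a + b = 1 →
      fh (a • x + b • y) +
        ((s / 2 * (a * ‖x‖ ^ 2 + b * ‖y‖ ^ 2 - ‖a • x + b • y‖ ^ 2) : ℝ) : EReal)
        ≤ (a : EReal) * fh x + (b : EReal) * fh y)
    (z : En n) (hz : z ∈ U) (hzt : fh z ≠ ⊤) (v : En n) (hv : v ∈ FSubdiff fh z)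
    (y : En n) (hy : y ∈ U) :
    fh z + ((⟪v, y - z⟫ + s / 2 * ‖y - z‖ ^ 2 : ℝ) : EReal) ≤ fh y := by
  by_cases hzb : fh z = ⊥
  · rw [hzb, EReal.bot_add]; exact bot_le
  set rz : ℝ := (fh z).toReal with hrzdef
  have hz' : fh z = (rz : EReal) := (EReal.coe_toReal hzt hzb).symm
  by_cases hyt : fh y = ⊤
  · rw [hyt]; exact le_top
  set d : ℝ := ‖y - z‖ with hddef
  have hd0 : 0 ≤ d := norm_nonneg _
  set I : ℝ := ⟪v, y - z⟫ with hIdef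
  -- generic construction of midpoints
  have hmid : ∀ lam : ℝ, 0 < lam → lam ≤ 1/2 →
      ((1 - lam) • z + lam • y ∈ U ∧ ((1 - lam) • z + lam • y) - z = lam • (y - z) ∧
       ‖((1 - lam) • z + lam • y) - z‖ = lam * d ∧
       fh ((1 - lam) • z + lam • y) + ((s / 2 * ((1 - lam) * lam * d ^ 2) : ℝ) : EReal)
         ≤ ((1 - lam) * rz : ℝ) + (lam : EReal) * fh y) := by
    intro lam hl0 hl2
    have hU : (1 - lam) • z + lam • y ∈ U := hUc hz hy (by linarith) hl0.le (by ring)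
    have hmz : ((1 - lam) • z + lam • y) - z = lam • (y - z) := by
      rw [smul_sub, sub_smul, one_smul]; abel
    have hnm : ‖((1 - lam) • z + lam • y) - z‖ = lam * d := by
      rw [hmz, norm_smul, Real.norm_eq_abs, abs_of_pos hl0]
    have hc := hconv z hz y hy (1 - lam) lam (by linarith) hl0.le (by ring)
    have hq : (1 - lam) * ‖z‖ ^ 2 + lam * ‖y‖ ^ 2 - ‖(1 - lam) • z + lam • y‖ ^ 2
        = (1 - lam) * lam * d ^ 2 := by
      rw [quad_id z y (1 - lam) lam (by ring), hddef, norm_sub_rev]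
    rw [hq, hz', ← EReal.coe_mul] at hc
    exact ⟨hU, hmz, hnm, hc⟩
  by_cases hyb : fh y = ⊥
  · -- show fh z = ⊥, contradiction
    exfalso
    obtain ⟨δ, hδ, H⟩ := hv 1 one_pos
    set lam : ℝ := min (1/2) (δ / (2 * (d + 1))) with hlamdef
    have hl0 : 0 < lam := lt_min (by norm_num) (by positivity)
    have hl2 : lam ≤ 1/2 := min_le_left _ _
    obtain ⟨hU, hmz, hnm, hc⟩ := hmid lam hl0 hl2
    have hball : ((1 - lam) • z + lam • y) ∈ ball z δ := by
      rw [mem_ball_iff_norm, hnm]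
      have h3 : lam * (2 * (d + 1)) ≤ δ := by
        rw [← le_div_iff₀ (by positivity)]; exact min_le_right _ _
      nlinarith [h3, mul_pos hl0 (show (0:ℝ) < d + 2 by linarith)]
    have hbot : fh ((1 - lam) • z + lam • y) = ⊥ := by
      rw [hyb] at hc
      have : (lam : EReal) * ⊥ = ⊥ := EReal.coe_mul_bot_of_pos (by exact_mod_cast hl0)
      rw [this, EReal.add_bot] at hc
      exact er_add_eq_bot _ _ (le_bot_iff.mp hc)
    have hF := H _ hball
    rw [hbot] at hF
    exact hzb (er_add_eq_bot _ _ (le_bot_iff.mp hF))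
  set ry : ℝ := (fh y).toReal with hrydef
  have hy' : fh y = (ry : EReal) := (EReal.coe_toReal hyt hyb).symm
  rw [hz', hy', ← EReal.coe_add, EReal.coe_le_coe_iff]
  refine le_of_forall_pos_le_add ?_
  intro ε hε
  set c : ℝ := ε / (2 * (d + 1)) with hcdef
  have hc0 : 0 < c := by positivity
  obtain ⟨δ, hδ, H⟩ := hv c hc0
  set lam : ℝ := min (1/2) (min (δ / (2 * (d + 1))) (ε / (|s| * d ^ 2 + 1))) with hlamdef
  have hl0 : 0 < lam := lt_min (by norm_num) (lt_min (by positivity) (by positivity))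
  have hl2 : lam ≤ 1/2 := min_le_left _ _
  obtain ⟨hU, hmz, hnm, hc2⟩ := hmid lam hl0 hl2
  have hball : ((1 - lam) • z + lam • y) ∈ ball z δ := by
    rw [mem_ball_iff_norm, hnm]
    have h3 : lam * (2 * (d + 1)) ≤ δ := by
      rw [← le_div_iff₀ (by positivity)]; exact le_trans (min_le_right _ _) (min_le_left _ _)
    nlinarith [h3, mul_pos hl0 (show (0:ℝ) < d + 2 by linarith)]
  have hF := H _ hball
  rw [hz', hnm] at hF
  have hIm : ⟪v, ((1 - lam) • z + lam • y) - z⟫ = lam * I := by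
    rw [hmz, real_inner_smul_right]
  rw [hIm] at hF
  have hchain : ((rz + (lam * I - c * (lam * d)) : ℝ) : EReal)
      ≤ (((1 - lam) * rz + lam * ry - s / 2 * ((1 - lam) * lam * d ^ 2) : ℝ) : EReal) := by
    calc ((rz + (lam * I - c * (lam * d)) : ℝ) : EReal)
        = (rz : EReal) + ((lam * I - c * (lam * d) : ℝ) : EReal) := EReal.coe_add _ _
      _ ≤ fh ((1 - lam) • z + lam • y) := hF
      _ ≤ (((1 - lam) * rz + lam * ry - s / 2 * ((1 - lam) * lam * d ^ 2) : ℝ) : EReal) := by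
          apply er_le_coe_sub
          rw [hy'] at hc2
          calc fh ((1 - lam) • z + lam • y) + ((s / 2 * ((1 - lam) * lam * d ^ 2) : ℝ) : EReal)
              ≤ ((1 - lam) * rz : ℝ) + (lam : EReal) * (ry : EReal) := hc2
            _ = (((1 - lam) * rz + lam * ry : ℝ) : EReal) := by
                rw [← EReal.coe_mul, ← EReal.coe_add]
  have hkey : rz + (lam * I - c * (lam * d))
      ≤ (1 - lam) * rz + lam * ry - s / 2 * ((1 - lam) * lam * d ^ 2) :=
    EReal.coe_le_coe_iff.mp hchain
  have hX : I - c * d + rz - ry + s / 2 * (1 - lam) * d ^ 2 ≤ 0 := by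
    have hlX : lam * (I - c * d + rz - ry + s / 2 * (1 - lam) * d ^ 2) ≤ lam * 0 := by
      nlinarith [hkey]
    exact (mul_le_mul_iff_right₀ hl0).mp hlX
  have hcd : c * d ≤ ε / 2 := by
    rw [hcdef]
    rw [div_mul_eq_mul_div]
    rw [div_le_div_iff₀ (by positivity) (by norm_num)]
    nlinarith [hd0, hε]
  have hsl : s / 2 * lam * d ^ 2 ≤ ε / 2 := by
    have h1 : lam ≤ ε / (|s| * d ^ 2 + 1) := le_trans (min_le_right _ _) (min_le_right _ _)
    have h2 : lam * (|s| * d ^ 2 + 1) ≤ ε := by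
      rw [← le_div_iff₀ (by positivity)]; exact h1
    nlinarith [h2, hl0.le, mul_nonneg (mul_nonneg (sub_nonneg.mpr (le_abs_self s)) hl0.le)
      (sq_nonneg d)]
  linarith [hX, hcd, hsl]

lemma lim_subgrad_of_conv (fh : En n → EReal) (s : ℝ) (U : Set (En n))
    (hUo : IsOpen U) (hUc : Convex ℝ U)
    (hconv : ∀ x ∈ U, ∀ y ∈ U, ∀ a b : ℝ, 0 ≤ a → 0 ≤ b → a + b = 1 →
      fh (a • x + b • y) +
        ((s / 2 * (a * ‖x‖ ^ 2 + b * ‖y‖ ^ 2 - ‖a • x + b • y‖ ^ 2) : ℝ) : EReal)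
        ≤ (a : EReal) * fh x + (b : EReal) * fh y)
    (x : En n) (hx : x ∈ U) (hxt : fh x ≠ ⊤) (v : En n) (hv : v ∈ LSubdiff fh x)
    (y : En n) (hy : y ∈ U) :
    fh x + ((⟪v, y - x⟫ + s / 2 * ‖y - x‖ ^ 2 : ℝ) : EReal) ≤ fh y := by
  obtain ⟨xs, vs, hF, hxs, hfx, hvs⟩ := hv
  have hU2 : ∀ᶠ k in atTop, xs k ∈ U := hxs.eventually_mem (hUo.mem_nhds hx)
  have hT : ∀ᶠ k in atTop, fh (xs k) ≠ ⊤ := by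
    have h1 : ∀ᶠ k in atTop, fh (xs k) ∈ Set.Iio (⊤ : EReal) :=
      hfx.eventually_mem (Iio_mem_nhds (lt_top_iff_ne_top.mpr hxt))
    exact h1.mono fun k hk => lt_top_iff_ne_top.mp hk
  have hEv : ∀ᶠ k in atTop,
      fh (xs k) + ((⟪vs k, y - xs k⟫ + s / 2 * ‖y - xs k‖ ^ 2 : ℝ) : EReal) ≤ fh y := by
    filter_upwards [hU2, hT] with k hkU hkT
    exact fre_subgrad_of_conv fh s U hUc hconv (xs k) hkU hkT (vs k) (hF k) y hy
  have hrt : Tendsto (fun k => ⟪vs k, y - xs k⟫ + s / 2 * ‖y - xs k‖ ^ 2) atTop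
      (𝓝 (⟪v, y - x⟫ + s / 2 * ‖y - x‖ ^ 2)) := by
    have h1 : Tendsto (fun k => y - xs k) atTop (𝓝 (y - x)) := tendsto_const_nhds.sub hxs
    exact (hvs.inner h1).add (((h1.norm.pow 2)).const_mul _)
  exact le_of_tendsto (tendsto_ereal_add_coe _ _ _ _ hfx hrt) hEv

end Helpers

set_option maxHeartbeats 1600000 in
theorem stmt8 (f : En n → EReal) (s t : ℝ) (xb xbs ystar : En n)
    (hf : LowerSemicontinuous f) (hvc : VarConv f s xb xbs) :
    VarConv
      (fun x => f x + ((⟪ystar, x - xb⟫ + t / 2 * ‖x - xb‖ ^ 2 : ℝ) : EReal))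
      (s + t) xb (xbs + ystar) := by
  show VarConv (fun x => f x + ((gfun ystar t xb x : ℝ) : EReal)) (s + t) xb (xbs + ystar)
  obtain ⟨⟨a, ha⟩, hxbs, U, V, fh, ρ, hUo, hUc, hxbU, hVo, hVc, hxbsV, hfhlsc, hρ, hconv,
    hle, hgraph, heq⟩ := hvc
  have hgxb : gfun ystar t xb xb = 0 := by simp [gfun]
  have haρ : a < ρ := by rw [ha] at hρ; exact_mod_cast hρ
  obtain ⟨r1, hr1, hr1sub⟩ := Metric.isOpen_iff.mp hUo xb hxbU
  obtain ⟨r2, hr2, hr2sub⟩ := Metric.isOpen_iff.mp hVo xbs hxbsV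
  obtain ⟨C, hCdef⟩ : ∃ C : ℝ, C = ‖ystar‖ + |t| + ‖xbs‖ + r2 + |s| + 1 := ⟨_, rfl⟩
  have hC : 0 < C := by rw [hCdef]; positivity
  have hρa : 0 < ρ - a := by linarith
  obtain ⟨δ, hδdef⟩ : ∃ δ : ℝ, δ = min 1 (min r1 (min (r2 / (2 * (|t| + 1))) ((ρ - a) / (4 * C)))) :=
    ⟨_, rfl⟩
  have hδ0 : 0 < δ := by
    rw [hδdef]
    exact lt_min one_pos (lt_min hr1 (lt_min (by positivity) (by positivity)))
  have hδ1 : δ ≤ 1 := by rw [hδdef]; exact min_le_left _ _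
  have hδr1 : δ ≤ r1 := by rw [hδdef]; exact le_trans (min_le_right _ _) (min_le_left _ _)
  have hδt : |t| * δ ≤ r2 / 2 := by
    have h1 : δ ≤ r2 / (2 * (|t| + 1)) := by
      rw [hδdef]
      exact le_trans (min_le_right _ _) (le_trans (min_le_right _ _) (min_le_left _ _))
    have h2 : δ * (2 * (|t| + 1)) ≤ r2 := by
      rw [← le_div_iff₀ (by positivity)]; exact h1
    nlinarith [hδ0.le]
  have hδC : δ * C ≤ (ρ - a) / 4 := by
    have h1 : δ ≤ (ρ - a) / (4 * C) := by
      rw [hδdef]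
      exact le_trans (min_le_right _ _) (le_trans (min_le_right _ _) (min_le_right _ _))
    have h2 : δ * (4 * C) ≤ ρ - a := by
      rw [← le_div_iff₀ (by positivity)]; exact h1
    linarith
  have hUsub : ball xb δ ⊆ U := le_trans (ball_subset_ball hδr1) hr1sub
  have hgb : ∀ x ∈ ball xb δ, |gfun ystar t xb x| ≤ δ * (‖ystar‖ + |t|) := by
    intro x hx
    have hn : ‖x - xb‖ ≤ δ := le_of_lt (mem_ball_iff_norm.mp hx)
    have h1 : |⟪ystar, x - xb⟫| ≤ ‖ystar‖ * ‖x - xb‖ := abs_real_inner_le_norm _ _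
    have h2 : |gfun ystar t xb x| ≤ ‖ystar‖ * ‖x - xb‖ + |t| / 2 * ‖x - xb‖ ^ 2 := by
      have h3 : |t / 2 * ‖x - xb‖ ^ 2| = |t| / 2 * ‖x - xb‖ ^ 2 := by
        rw [abs_mul, abs_div, abs_two, abs_of_nonneg (sq_nonneg ‖x - xb‖)]
      calc |gfun ystar t xb x| ≤ |⟪ystar, x - xb⟫| + |t / 2 * ‖x - xb‖ ^ 2| := abs_add_le _ _
        _ ≤ ‖ystar‖ * ‖x - xb‖ + |t| / 2 * ‖x - xb‖ ^ 2 := by rw [h3]; linarith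
    have hA : ‖ystar‖ * ‖x - xb‖ ≤ ‖ystar‖ * δ := mul_le_mul_of_nonneg_left hn (norm_nonneg _)
    have hB : ‖x - xb‖ ^ 2 ≤ δ ^ 2 := by nlinarith [norm_nonneg (x - xb)]
    have hCC : δ ^ 2 ≤ δ := by nlinarith [hδ0.le]
    have hD : |t| / 2 * ‖x - xb‖ ^ 2 ≤ |t| * δ := by nlinarith [abs_nonneg t]
    nlinarith [h2, hA, hD]
  have hVball : ∀ x ∈ ball xb δ, ∀ xv ∈ ball (xbs + ystar) (r2 / 2),
      xv - Gmap ystar t xb x ∈ ball xbs r2 := by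
    intro x hx xv hxv
    rw [mem_ball_iff_norm]
    have he : xv - Gmap ystar t xb x - xbs = (xv - (xbs + ystar)) - t • (x - xb) := by
      simp only [Gmap]; abel
    rw [he]
    have h1 : ‖xv - (xbs + ystar)‖ < r2 / 2 := mem_ball_iff_norm.mp hxv
    have h2 : ‖t • (x - xb)‖ ≤ |t| * δ := by
      rw [norm_smul, Real.norm_eq_abs]
      exact mul_le_mul_of_nonneg_left (le_of_lt (mem_ball_iff_norm.mp hx)) (abs_nonneg t)
    calc ‖(xv - (xbs + ystar)) - t • (x - xb)‖
        ≤ ‖xv - (xbs + ystar)‖ + ‖t • (x - xb)‖ := norm_sub_le _ _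
      _ < r2 := by linarith
  refine ⟨⟨a, ?_⟩, ?_, ball xb δ, ball (xbs + ystar) (r2 / 2),
    (fun x => fh x + ((gfun ystar t xb x : ℝ) : EReal)), (a + ρ) / 2,
    isOpen_ball, convex_ball _ _, mem_ball_self hδ0, isOpen_ball, convex_ball _ _,
    mem_ball_self (by positivity), lsc_add_gfun fh hfhlsc _ _ _, ?_, ?_, ?_, ?_, ?_⟩
  · show f xb + ((gfun ystar t xb xb : ℝ) : EReal) = (a : EReal)
    rw [hgxb, EReal.coe_zero, add_zero, ha]
  · have h1 := lsub_shift f ystar t xb xb xbs hxbs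
    simpa [Gmap] using h1
  · show f xb + ((gfun ystar t xb xb : ℝ) : EReal) < (((a + ρ) / 2 : ℝ) : EReal)
    rw [hgxb, EReal.coe_zero, add_zero, ha]
    exact_mod_cast (by linarith : a < (a + ρ) / 2)
  · -- convexity
    intro x hx y hy aa bb haa hbb hab
    have hxU : x ∈ U := hUsub hx
    have hyU : y ∈ U := hUsub hy
    have h1 := hconv x hxU y hyU aa bb haa hbb hab
    dsimp only
    set m := aa • x + bb • y with hmdef
    set Q : ℝ := aa * ‖x‖ ^ 2 + bb * ‖y‖ ^ 2 - ‖m‖ ^ 2 with hQdef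
    have hid : gfun ystar t xb m + (s + t) / 2 * Q
        = s / 2 * Q + (aa * gfun ystar t xb x + bb * gfun ystar t xb y) := by
      have h2 := gfun_convex ystar t xb x y aa bb hab
      rw [← hmdef, ← hQdef] at h2
      linarith
    calc fh m + ((gfun ystar t xb m : ℝ) : EReal) + (((s + t) / 2 * Q : ℝ) : EReal)
        = fh m + ((gfun ystar t xb m + (s + t) / 2 * Q : ℝ) : EReal) := er_add_add _ _ _
      _ = fh m + ((s / 2 * Q + (aa * gfun ystar t xb x + bb * gfun ystar t xb y) : ℝ) : EReal) := by
          rw [hid]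
      _ = fh m + ((s / 2 * Q : ℝ) : EReal)
            + ((aa * gfun ystar t xb x + bb * gfun ystar t xb y : ℝ) : EReal) :=
          (er_add_add _ _ _).symm
      _ ≤ ((aa : ℝ) : EReal) * fh x + ((bb : ℝ) : EReal) * fh y
            + ((aa * gfun ystar t xb x + bb * gfun ystar t xb y : ℝ) : EReal) :=
          add_le_add h1 le_rfl
      _ = ((aa : ℝ) : EReal) * (fh x + ((gfun ystar t xb x : ℝ) : EReal))
            + ((bb : ℝ) : EReal) * (fh y + ((gfun ystar t xb y : ℝ) : EReal)) := by
          rw [er_mul_add_coe aa haa, er_mul_add_coe bb hbb, EReal.coe_add]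
          abel
  · -- minorant
    intro x hx
    exact add_le_add (hle x (hUsub hx)) le_rfl
  · -- graph equality
    ext p
    obtain ⟨x, xv⟩ := p
    simp only [Set.mem_inter_iff, Set.mem_setOf_eq, Set.mem_prod]
    constructor
    · rintro ⟨⟨hsub, hlt⟩, hx, hxv⟩
      refine ⟨?_, hx, hxv⟩
      obtain ⟨v, hvdef⟩ : ∃ v, v = xv - Gmap ystar t xb x := ⟨_, rfl⟩
      have hveq : v + Gmap ystar t xb x = xv := by rw [hvdef]; abel
      have hvf : v ∈ LSubdiff f x := by
        rw [lsub_shift_iff f ystar t xb x v, hveq]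
        exact hsub
      have hflt : f x < (ρ : EReal) := by
        have h1 : f x < (((a + ρ) / 2 - gfun ystar t xb x : ℝ) : EReal) :=
          er_lt_coe_sub _ _ _ hlt
        refine lt_of_lt_of_le h1 (EReal.coe_le_coe_iff.mpr ?_)
        have h2 := hgb x hx
        have h3 : δ * (‖ystar‖ + |t|) ≤ δ * C := by
          apply mul_le_mul_of_nonneg_left _ hδ0.le
          rw [hCdef]
          have := abs_nonneg s; have := norm_nonneg xbs
          linarith
        have h4 := abs_le.mp h2
        linarith
      have hmem1 : (x, v) ∈ ({p : En n × En n | p.2 ∈ LSubdiff f p.1 ∧ f p.1 < (ρ : EReal)}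
          ∩ U ×ˢ V) := by
        refine ⟨⟨hvf, hflt⟩, hUsub hx, hr2sub ?_⟩
        rw [hvdef]; exact hVball x hx xv hxv
      rw [hgraph] at hmem1
      have h5 := lsub_shift fh ystar t xb x v hmem1.1
      rwa [hveq] at h5
    · rintro ⟨hsub, hx, hxv⟩
      obtain ⟨v, hvdef⟩ : ∃ v, v = xv - Gmap ystar t xb x := ⟨_, rfl⟩
      have hveq : v + Gmap ystar t xb x = xv := by rw [hvdef]; abel
      have hvfh : v ∈ LSubdiff fh x := by
        rw [lsub_shift_iff fh ystar t xb x v, hveq]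
        exact hsub
      have hvball : v ∈ ball xbs r2 := by rw [hvdef]; exact hVball x hx xv hxv
      have hmem2 : (x, v) ∈ ({p : En n × En n | p.2 ∈ LSubdiff fh p.1} ∩ U ×ˢ V) :=
        ⟨hvfh, hUsub hx, hr2sub hvball⟩
      rw [← hgraph] at hmem2
      obtain ⟨⟨hvf, hflt⟩, hxU, hvV⟩ := hmem2
      have heqv : f x = fh x := heq (x, v) ⟨⟨hvf, hflt⟩, hxU, hvV⟩
      refine ⟨⟨?_, ?_⟩, hx, hxv⟩
      · have h5 := lsub_shift f ystar t xb x v hvf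
        rwa [hveq] at h5
      · -- ψ x < ρ'
        have hfht : fh x ≠ ⊤ := by
          rw [← heqv]
          exact (hflt.trans (EReal.coe_lt_top ρ)).ne
        have hsg := lim_subgrad_of_conv fh s U hUo hUc hconv x hxU hfht v hvfh xb hxbU
        have hfhxb : fh xb ≤ (a : EReal) := ha ▸ hle xb hxbU
        obtain ⟨r0, hr0def⟩ : ∃ r0 : ℝ, r0 = ⟪v, xb - x⟫ + s / 2 * ‖xb - x‖ ^ 2 := ⟨_, rfl⟩
        rw [← hr0def] at hsg
        have h3 : fh x ≤ ((a - r0 : ℝ) : EReal) := er_le_coe_sub _ _ _ (hsg.trans hfhxb)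
        have hnv : ‖v‖ ≤ ‖xbs‖ + r2 := by
          have h4 : ‖v - xbs‖ < r2 := mem_ball_iff_norm.mp hvball
          calc ‖v‖ = ‖(v - xbs) + xbs‖ := by rw [sub_add_cancel]
            _ ≤ ‖v - xbs‖ + ‖xbs‖ := norm_add_le _ _
            _ ≤ ‖xbs‖ + r2 := by linarith
        have hnx : ‖xb - x‖ ≤ δ := by
          rw [norm_sub_rev]
          exact le_of_lt (mem_ball_iff_norm.mp hx)
        have hr0 : -r0 ≤ δ * (‖xbs‖ + r2 + |s|) := by
          have h6 : |⟪v, xb - x⟫| ≤ ‖v‖ * ‖xb - x‖ := abs_real_inner_le_norm _ _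
          have h7 : ‖v‖ * ‖xb - x‖ ≤ (‖xbs‖ + r2) * δ := by
            apply mul_le_mul hnv hnx (norm_nonneg _)
            have := norm_nonneg xbs; linarith
          have h8 : ‖xb - x‖ ^ 2 ≤ δ := by
            nlinarith [norm_nonneg (xb - x), hδ1, hδ0.le]
          have h9 : -(s / 2 * ‖xb - x‖ ^ 2) ≤ |s| * δ := by
            have := neg_abs_le s
            nlinarith [abs_nonneg s, sq_nonneg ‖xb - x‖, norm_nonneg (xb - x), hδ0.le, hδ1]
          have h10 := abs_le.mp h6
          rw [hr0def]
          nlinarith [h10.1, h10.2]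
        have hgx := abs_le.mp (hgb x hx)
        have hfinal : a - r0 + gfun ystar t xb x < (a + ρ) / 2 := by
          have h11 : δ * ((‖xbs‖ + r2 + |s|) + (‖ystar‖ + |t|)) ≤ δ * C := by
            apply mul_le_mul_of_nonneg_left _ hδ0.le
            rw [hCdef]; linarith
          nlinarith [hr0, hgx.2, hδC, hρa, hδ0.le]
        calc f x + ((gfun ystar t xb x : ℝ) : EReal)
            = fh x + ((gfun ystar t xb x : ℝ) : EReal) := by rw [heqv]
          _ ≤ ((a - r0 : ℝ) : EReal) + ((gfun ystar t xb x : ℝ) : EReal) :=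
              add_le_add h3 le_rfl
          _ = ((a - r0 + gfun ystar t xb x : ℝ) : EReal) := by rw [← EReal.coe_add]
          _ < (((a + ρ) / 2 : ℝ) : EReal) := EReal.coe_lt_coe_iff.mpr hfinal
  · -- equal values
    rintro ⟨x, xv⟩ ⟨⟨hsub, hlt⟩, hx, hxv⟩
    dsimp only
    obtain ⟨v, hvdef⟩ : ∃ v, v = xv - Gmap ystar t xb x := ⟨_, rfl⟩
    have hveq : v + Gmap ystar t xb x = xv := by rw [hvdef]; abel
    have hvf : v ∈ LSubdiff f x := by
      rw [lsub_shift_iff f ystar t xb x v, hveq]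
      exact hsub
    have hflt : f x < (ρ : EReal) := by
      have h1 : f x < (((a + ρ) / 2 - gfun ystar t xb x : ℝ) : EReal) :=
        er_lt_coe_sub _ _ _ hlt
      refine lt_of_lt_of_le h1 (EReal.coe_le_coe_iff.mpr ?_)
      have h2 := hgb x hx
      have h3 : δ * (‖ystar‖ + |t|) ≤ δ * C := by
        apply mul_le_mul_of_nonneg_left _ hδ0.le
        rw [hCdef]
        have := abs_nonneg s; have := norm_nonneg xbs
        linarith
      have h4 := abs_le.mp h2
      linarith
    have heqv : f x = fh x := by
      refine heq (x, v) ⟨⟨hvf, hflt⟩, hUsub hx, hr2sub ?_⟩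
      rw [hvdef]; exact hVball x hx xv hxv
    rw [heqv]
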